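/- arXiv:2603.20790 — 6 statements merged into one kernel-verified Lean document; each statement's English description precedes it below -/
import Mathlib

section
/- Let w be a word over an alphabet Σ, u a nonempty word, j ∈ {1,...,|w|} and i ∈ {1,...,|u|}. If w[j] = u[i], then C(w[1..j], u[1..i]) = C(w[1..j-1], u[1..i-1]) ∪ { v·w[j] : v ∈ C(w[1..j-1], u[1..i]) }, and if w[j] ≠ u[i], then C(w[1..j], u[1..i]) = { v·w[j] : v ∈ C(w[1..j-1], u[1..i]) } (where w[1..0] = ε and u[1..0] = ε, and C(x,y) = ∅ whenever y is not a scattered factor of x). -/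
def IsEmbedding {α : Type*} (w u : List α) (e : Fin u.length → Fin w.length) : Prop :=
  StrictMono e ∧ ∀ i : Fin u.length, u.get i = w.get (e i)

def InShuffle {α : Type*} (u v w : List α) : Prop :=
  w.length = u.length + v.length ∧
    ∃ (e₁ : Fin u.length → Fin w.length) (e₂ : Fin v.length → Fin w.length),
      IsEmbedding w u e₁ ∧ IsEmbedding w v e₂ ∧ ∀ i j, e₁ i ≠ e₂ j

def CompSet {α : Type*} (w u : List α) : Set (List α) := {v | InShuffle u v w}

section Aux
variable {α : Type*}

lemma inShuffle_swap {u v w : List α} (h : InShuffle u v w) : InShuffle v u w := by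
  obtain ⟨hl, e₁, e₂, h₁, h₂, hd⟩ := h
  exact ⟨by omega, e₂, e₁, h₂, h₁, fun i j => (hd j i).symm⟩

lemma inShuffle_nil : InShuffle ([] : List α) [] [] := by
  refine ⟨rfl, Fin.elim0, Fin.elim0, ⟨?_, ?_⟩, ⟨?_, ?_⟩, ?_⟩ <;> intro i <;> exact i.elim0

lemma inShuffle_snoc_left {u v w : List α} {a : α} (h : InShuffle u v w) :
    InShuffle (u ++ [a]) v (w ++ [a]) := by
  obtain ⟨hl, e₁, e₂, ⟨hm₁, hg₁⟩, ⟨hm₂, hg₂⟩, hd⟩ := h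
  refine ⟨by simp; omega,
    fun i => if hi : (i : ℕ) < u.length then ⟨e₁ ⟨i, hi⟩, by simp⟩
      else ⟨w.length, by simp⟩,
    fun j => ⟨e₂ j, by have := (e₂ j).isLt; simp⟩, ⟨?_, ?_⟩, ⟨?_, ?_⟩, ?_⟩
  · intro i j hij
    have hij' : (i : ℕ) < (j : ℕ) := hij
    have hi' : (i : ℕ) < u.length + 1 := by have := i.isLt; simpa using this
    have hj' : (j : ℕ) < u.length + 1 := by have := j.isLt; simpa using this
    dsimp only
    split_ifs with hi hj hj
    · exact Fin.mk_lt_mk.2 (hm₁ (show (⟨(i:ℕ), hi⟩ : Fin u.length) < ⟨(j:ℕ), hj⟩ from hij'))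
    · exact Fin.mk_lt_mk.2 (e₁ ⟨(i:ℕ), hi⟩).isLt
    · omega
    · omega
  · intro i
    have hi' : (i : ℕ) < u.length + 1 := by have := i.isLt; simpa using this
    dsimp only
    split_ifs with hi
    · simp only [List.get_eq_getElem]
      rw [List.getElem_append_left hi, List.getElem_append_left (e₁ ⟨(i:ℕ), hi⟩).isLt]
      exact hg₁ ⟨(i:ℕ), hi⟩
    · have hieq : (i : ℕ) = u.length := by omega
      simp only [List.get_eq_getElem]
      simp [hieq, List.getElem_concat_length]
  · intro i j hij
    have : (e₂ i : ℕ) < (e₂ j : ℕ) := hm₂ hij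
    exact Fin.mk_lt_mk.2 this
  · intro j
    simp only [List.get_eq_getElem]
    rw [List.getElem_append_left (e₂ j).isLt]
    exact hg₂ j
  · intro i j
    dsimp only
    split_ifs with hi
    · intro hc
      have hv := congrArg Fin.val hc
      simp only at hv
      exact hd ⟨(i:ℕ), hi⟩ j (Fin.ext hv)
    · intro hc
      have hv := congrArg Fin.val hc
      simp only at hv
      have := (e₂ j).isLt
      omega

lemma inShuffle_snoc_right {u v w : List α} {a : α} (h : InShuffle u v w) :
    InShuffle u (v ++ [a]) (w ++ [a]) :=
  inShuffle_swap (inShuffle_snoc_left (inShuffle_swap h))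

lemma cover {m n k : ℕ} (hk : k = m + n) (e₁ : Fin m → Fin k) (e₂ : Fin n → Fin k)
    (h₁ : Function.Injective e₁) (h₂ : Function.Injective e₂)
    (hd : ∀ i j, e₁ i ≠ e₂ j) (x : Fin k) :
    (∃ i, e₁ i = x) ∨ ∃ j, e₂ j = x := by
  classical
  have hdisj : Disjoint (Finset.univ.image e₁) (Finset.univ.image e₂) := by
    rw [Finset.disjoint_left]
    rintro a ha hb
    simp only [Finset.mem_image, Finset.mem_univ, true_and] at ha hb
    obtain ⟨i, rfl⟩ := ha
    obtain ⟨j, hj⟩ := hb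
    exact hd i j hj.symm
  have hcard : (Finset.univ.image e₁ ∪ Finset.univ.image e₂).card = Fintype.card (Fin k) := by
    rw [Finset.card_union_of_disjoint hdisj, Finset.card_image_of_injective _ h₁,
      Finset.card_image_of_injective _ h₂]
    simp [hk]
  have huniv := Finset.eq_univ_of_card _ hcard
  have hx : x ∈ Finset.univ.image e₁ ∪ Finset.univ.image e₂ := by
    rw [huniv]; exact Finset.mem_univ x
  rcases Finset.mem_union.1 hx with h | h <;>
    simp only [Finset.mem_image, Finset.mem_univ, true_and] at h
  · exact Or.inl h
  · exact Or.inr h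

lemma elim_top {u v w : List α} {a : α}
    (hl : (w ++ [a]).length = u.length + v.length)
    (e₁ : Fin u.length → Fin (w ++ [a]).length)
    (e₂ : Fin v.length → Fin (w ++ [a]).length)
    (h₁ : IsEmbedding (w ++ [a]) u e₁) (h₂ : IsEmbedding (w ++ [a]) v e₂)
    (hd : ∀ i j, e₁ i ≠ e₂ j) (i₀ : Fin u.length) (hi₀ : (e₁ i₀ : ℕ) = w.length) :
    ∃ u', u = u' ++ [a] ∧ InShuffle u' v w := by
  have hne : u ≠ [] := by
    rintro rfl
    exact absurd i₀.isLt (by simp)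
  have hpos : 0 < u.length := List.length_pos_iff.2 hne
  set top : Fin u.length := ⟨u.length - 1, by omega⟩ with htopdef
  have htopval : (e₁ top : ℕ) = w.length := by
    have h1 : e₁ i₀ ≤ e₁ top := h₁.1.monotone (by
      show (i₀ : ℕ) ≤ u.length - 1
      have := i₀.isLt; omega)
    have h2 : (e₁ top : ℕ) < w.length + 1 := by have := (e₁ top).isLt; simpa using this
    have h3 : (e₁ i₀ : ℕ) ≤ (e₁ top : ℕ) := h1
    omega
  have hba : u.getLast hne = a := by
    have hg := h₁.2 top
    simp only [List.get_eq_getElem] at hg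
    rw [List.getLast_eq_getElem]
    rw [hg]
    simp only [htopval]
    exact List.getElem_concat_length rfl (by simp)
  refine ⟨u.dropLast, by rw [← hba]; exact (List.dropLast_append_getLast hne).symm, ?_⟩
  have hdl : u.dropLast.length = u.length - 1 := List.length_dropLast
  have hcast : ∀ i : Fin u.dropLast.length, (i : ℕ) < u.length := by
    intro i; have := i.isLt; omega
  have hlttop : ∀ i : Fin u.dropLast.length, (⟨(i:ℕ), hcast i⟩ : Fin u.length) < top := by
    intro i
    show (i : ℕ) < u.length - 1
    have := i.isLt; omega
  have hlt₁ : ∀ i : Fin u.dropLast.length, (e₁ ⟨(i:ℕ), hcast i⟩ : ℕ) < w.length := by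
    intro i
    have : e₁ ⟨(i:ℕ), hcast i⟩ < e₁ top := h₁.1 (hlttop i)
    omega
  have hne₂ : ∀ j, (e₂ j : ℕ) ≠ w.length := by
    intro j hc
    exact hd top j (Fin.ext (htopval.trans hc.symm))
  have hlt₂ : ∀ j, (e₂ j : ℕ) < w.length := by
    intro j
    have h1 := (e₂ j).isLt
    have h2 := hne₂ j
    simp at h1
    omega
  refine ⟨by simp at hl ⊢; omega,
    fun i => ⟨e₁ ⟨(i:ℕ), hcast i⟩, hlt₁ i⟩,
    fun j => ⟨e₂ j, hlt₂ j⟩, ⟨?_, ?_⟩, ⟨?_, ?_⟩, ?_⟩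
  · intro i j hij
    exact Fin.mk_lt_mk.2 (h₁.1 (show (⟨(i:ℕ), hcast i⟩ : Fin u.length) < ⟨(j:ℕ), hcast j⟩ from
      Fin.mk_lt_mk.2 hij))
  · intro i
    have hg := h₁.2 ⟨(i:ℕ), hcast i⟩
    simp only [List.get_eq_getElem] at hg ⊢
    rw [List.getElem_dropLast]
    rw [hg]
    exact List.getElem_append_left (hlt₁ i)
  · intro i j hij
    exact Fin.mk_lt_mk.2 (h₂.1 hij)
  · intro j
    have hg := h₂.2 j
    simp only [List.get_eq_getElem] at hg ⊢
    rw [hg]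
    exact List.getElem_append_left (hlt₂ j)
  · intro i j hc
    have hv := congrArg Fin.val hc
    simp only at hv
    exact hd ⟨(i:ℕ), hcast i⟩ j (Fin.ext hv)

lemma inShuffle_snoc_elim {u v w : List α} {a : α} (h : InShuffle u v (w ++ [a])) :
    (∃ u', u = u' ++ [a] ∧ InShuffle u' v w) ∨
      (∃ v', v = v' ++ [a] ∧ InShuffle u v' w) := by
  obtain ⟨hl, e₁, e₂, h₁, h₂, hd⟩ := h
  have hc := cover (by simpa using hl) e₁ e₂ h₁.1.injective h₂.1.injective hd
    ⟨w.length, by simp⟩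
  rcases hc with ⟨i, hi⟩ | ⟨j, hj⟩
  · exact Or.inl (elim_top hl e₁ e₂ h₁ h₂ hd i (by rw [hi]))
  · right
    obtain ⟨v', hv, hs⟩ := elim_top (by simp at hl ⊢; omega) e₂ e₁ h₂ h₁
      (fun i j hc => hd j i hc.symm) j (by rw [hj])
    exact ⟨v', hv, inShuffle_swap hs⟩

lemma take_eq {β : Type*} (l : List β) (j : ℕ) (h1 : 1 ≤ j) (h2 : j ≤ l.length) :
    l.take j = l.take (j-1) ++ [l[j-1]'(by omega)] := by
  have hj : j = (j - 1) + 1 := by omega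
  conv_lhs => rw [hj]
  rw [List.take_succ]
  congr 1
  rw [List.getElem?_eq_getElem (show j - 1 < l.length by omega)]
  rfl

end Aux

/-- Recurrence for the complement scattered factor sets of prefixes
(positions are 1-indexed in the informal statement; `w[j]` is `w[j-1]'_` here). -/
theorem stmt0 {α : Type*} (w u : List α) (hu : u ≠ [])
    (j i : ℕ) (hj1 : 1 ≤ j) (hjw : j ≤ w.length) (hi1 : 1 ≤ i) (hiu : i ≤ u.length) :
    (w[j-1]'(by omega) = u[i-1]'(by omega) →
      CompSet (w.take j) (u.take i) =
        CompSet (w.take (j-1)) (u.take (i-1)) ∪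
          (fun v => v ++ [w[j-1]'(by omega)]) '' CompSet (w.take (j-1)) (u.take i)) ∧
    (w[j-1]'(by omega) ≠ u[i-1]'(by omega) →
      CompSet (w.take j) (u.take i) =
        (fun v => v ++ [w[j-1]'(by omega)]) '' CompSet (w.take (j-1)) (u.take i)) := by
  have hwj : w.take j = w.take (j-1) ++ [w[j-1]'(by omega)] := take_eq w j hj1 hjw
  have hui : u.take i = u.take (i-1) ++ [u[i-1]'(by omega)] := take_eq u i hi1 hiu
  set c := w[j-1]'(by omega) with hc
  set b := u[i-1]'(by omega) with hb
  constructor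
  · intro heq
    ext v
    simp only [CompSet, Set.mem_setOf_eq, Set.mem_union, Set.mem_image]
    constructor
    · intro hv
      rw [hwj, hui] at hv
      rcases inShuffle_snoc_elim hv with ⟨u'', hu'', hs⟩ | ⟨v', hv', hs⟩
      · left
        have hlen : (u.take (i-1)).length = u''.length := by
          have := congrArg List.length hu''
          simp only [List.length_append, List.length_singleton] at this
          omega
        obtain ⟨h1, _⟩ := List.append_inj hu'' hlen
        rw [← h1] at hs
        exact hs
      · right
        exact ⟨v', by rw [hui]; exact hs, hv'.symm⟩
    · rintro (hv | ⟨v', hv', rfl⟩)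
      · rw [hwj, hui, heq]
        exact inShuffle_snoc_left hv
      · rw [hwj]
        exact inShuffle_snoc_right hv'
  · intro hne
    ext v
    simp only [CompSet, Set.mem_setOf_eq, Set.mem_image]
    constructor
    · intro hv
      rw [hwj, hui] at hv
      rcases inShuffle_snoc_elim hv with ⟨u'', hu'', hs⟩ | ⟨v', hv', hs⟩
      · exfalso
        have hbc : [b] = [c] := (List.append_inj' hu'' rfl).2
        exact hne (by injection hbc with h; rw [h])
      · exact ⟨v', by rw [hui]; exact hs, hv'.symm⟩
    · rintro ⟨v', hv', rfl⟩
      rw [hwj]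
      exact inShuffle_snoc_right hv'
end

section
/- Let w be a word over Σ = alph(w) and u a scattered factor of w with |u| ≤ ι(w), where ι(w) is the universality index of w. Then the number of embeddings of u in w satisfies |E(w,u)| ≥ binom(ι(w), |u|). -/
/-- `w` is `k`-universal: every word of length `k` over `alph w` is a
scattered factor of `w`. -/
def IsKUniversal {α : Type*} (w : List α) (k : ℕ) : Prop :=
  ∀ u : List α, u.length = k → (∀ a ∈ u, a ∈ w) → u.Sublist w


section Aux
variable {α : Type*} [DecidableEq α]

lemma cons_sublist_drop (a : α) (u : List α) :
    ∀ y : List α, (a :: u).Sublist y → u.Sublist (y.drop (y.idxOf a + 1))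
  | [], h => by simp at h
  | b :: y, h => by
    by_cases hab : b = a
    · subst hab
      rw [List.idxOf_cons_self]
      simp only [List.drop_succ_cons, List.drop_zero]
      cases h with
      | cons _ h' => exact ((List.sublist_cons_self b u).trans h')
      | cons_cons _ h' => exact h'
    · have h' : (a :: u).Sublist y := by
        cases h with
        | cons _ h' => exact h'
        | cons_cons _ h' => exact absurd rfl hab
      rw [List.idxOf_cons_ne _ hab]
      simpa using cons_sublist_drop a u y h'

lemma arch_step (w : List α) (hw : w ≠ []) (k : ℕ) (y : List α)
    (h : ∀ v : List α, v.length = k + 1 → (∀ a ∈ v, a ∈ w) → v.Sublist y) :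
    ∃ x z : List α, y = x ++ z ∧ (∀ a ∈ w, a ∈ x) ∧
      ∀ v : List α, v.length = k → (∀ a ∈ v, a ∈ w) → v.Sublist z := by
  have hmem : ∀ a ∈ w, a ∈ y := by
    intro a ha
    have := h (a :: List.replicate k a) (by simp) (by
      intro b hb
      rcases List.mem_cons.1 hb with rfl | hb
      · exact ha
      · rwa [List.eq_of_mem_replicate hb])
    exact this.subset (List.mem_cons_self)
  obtain ⟨a, haw, hamax⟩ := Finset.exists_max_image w.toFinset (fun b => y.idxOf b)
    ⟨w.head hw, by simpa using List.head_mem hw⟩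
  rw [List.mem_toFinset] at haw
  set p := y.idxOf a with hp
  refine ⟨y.take (p + 1), y.drop (p + 1), (List.take_append_drop _ _).symm, ?_, ?_⟩
  · intro b hb
    have hby : b ∈ y := hmem b hb
    have hq : y.idxOf b < y.length := List.idxOf_lt_length_iff.2 hby
    have hqp : y.idxOf b ≤ p := hamax b (List.mem_toFinset.2 hb)
    have : (y.take (p + 1))[y.idxOf b]'(by
        rw [List.length_take]; omega) = b := by
      rw [List.getElem_take, List.getElem_idxOf hq]
    exact this ▸ List.getElem_mem _
  · intro v hv hvw
    have := h (a :: v) (by simp [hv]) (by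
      intro b hb
      rcases List.mem_cons.1 hb with rfl | hb
      · exact haw
      · exact hvw b hb)
    exact cons_sublist_drop a v y this

lemma arch_decomp (w : List α) : ∀ (k : ℕ) (y : List α),
    (∀ v : List α, v.length = k → (∀ a ∈ v, a ∈ w) → v.Sublist y) →
    ∃ (parts : List (List α)) (rest : List α),
      parts.length = k ∧ y = parts.flatten ++ rest ∧ ∀ x ∈ parts, ∀ a ∈ w, a ∈ x := by
  intro k
  by_cases hw : w = []
  · intro y _
    refine ⟨List.replicate k [], y, by simp, by simp, ?_⟩
    intro x hx a ha
    simp [hw] at ha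
  · induction k with
    | zero => intro y _; exact ⟨[], y, by simp, by simp, by simp⟩
    | succ k ih =>
      intro y h
      obtain ⟨x, z, rfl, hx, hz⟩ := arch_step w hw k y h
      obtain ⟨parts, rest, hplen, hdecomp, harch⟩ := ih z hz
      refine ⟨x :: parts, rest, by simp [hplen], by simp [hdecomp], ?_⟩
      intro x' hx' a ha
      rcases List.mem_cons.1 hx' with rfl | hx'
      · exact hx a ha
      · exact harch x' hx' a ha

-- start of arch s
lemma start_mono (parts : List (List α)) : Monotone (fun s => (parts.take s).flatten.length) := by
  apply monotone_nat_of_le_succ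
  intro s
  simp only [List.take_succ, List.flatten_append, List.length_append]
  omega

lemma start_succ (parts : List (List α)) {s : ℕ} (hs : s < parts.length) :
    (parts.take (s + 1)).flatten.length = (parts.take s).flatten.length + parts[s].length := by
  rw [List.take_succ, List.getElem?_eq_getElem hs]
  simp only [Option.toList_some, List.flatten_append, List.flatten_cons, List.flatten_nil,
    List.append_nil, List.length_append]

lemma pos_lt (parts : List (List α)) (rest : List α) {s : ℕ} (hs : s < parts.length)
    {t : ℕ} (ht : t < parts[s].length) :
    (parts.take s).flatten.length + t < (parts.flatten ++ rest).length := by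
  have h1 : (parts.take s).flatten.length + t < (parts.take (s + 1)).flatten.length := by
    rw [start_succ parts hs]; omega
  have h2 : (parts.take (s + 1)).flatten.length ≤ (parts.take parts.length).flatten.length :=
    start_mono parts (by omega)
  rw [List.take_length] at h2
  simp only [List.length_append]
  omega

lemma pos_get (parts : List (List α)) (rest : List α) {s : ℕ} (hs : s < parts.length)
    {t : ℕ} (ht : t < parts[s].length) :
    (parts.flatten ++ rest)[(parts.take s).flatten.length + t]'(pos_lt parts rest hs ht)
      = parts[s][t] := by
  have h1 : parts.flatten ++ rest
      = (parts.take s).flatten ++ (parts[s] ++ ((parts.drop (s+1)).flatten ++ rest)) := by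
    conv_lhs => rw [← List.take_append_drop s parts]
    rw [List.flatten_append, List.drop_eq_getElem_cons hs, List.flatten_cons]
    rw [List.append_assoc, List.append_assoc]
  have h2 := pos_lt parts rest hs ht
  rw [List.getElem_of_eq h1]
  rw [List.getElem_append_right (by omega)]
  simp only [Nat.add_sub_cancel_left]
  rw [List.getElem_append_left ht]

end Aux

/-- If `u` is a scattered factor of `w` with `|u| ≤ ι(w)` (here `ι(w) = k` is
pinned by `w` being `k`-universal but not `(k+1)`-universal), then
`|E(w,u)| ≥ binom(ι(w), |u|)`. -/
theorem stmt7 {α : Type*} (w : List α) (k : ℕ)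
    (hk : IsKUniversal w k) (hk' : ¬ IsKUniversal w (k + 1))
    (u : List α) (hu : u.Sublist w) (hlen : u.length ≤ k) :
    Nat.choose k u.length ≤
      {e : Fin u.length → Fin w.length | IsEmbedding w u e}.ncard := by
  classical
  obtain ⟨parts, rest, hplen, hdecomp, harch⟩ :=
    arch_decomp w k w (fun v hv ha => hk v hv ha)
  set E := {e : Fin u.length → Fin w.length | IsEmbedding w u e} with hE
  have hmemw : ∀ j : Fin u.length, u.get j ∈ w :=
    fun j => hu.subset (List.get_mem u j)
  have hσlt : ∀ (S : Finset (Fin k)) (hS : S.card = u.length) (j : Fin u.length),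
      ((S.orderEmbOfFin hS j : Fin k) : ℕ) < parts.length := by
    intro S hS j; rw [hplen]; exact (S.orderEmbOfFin hS j).isLt
  have hmempart : ∀ (S : Finset (Fin k)) (hS : S.card = u.length) (j : Fin u.length),
      u.get j ∈ parts[((S.orderEmbOfFin hS j : Fin k) : ℕ)]'(hσlt S hS j) :=
    fun S hS j => harch _ (List.getElem_mem _) _ (hmemw j)
  have hidx : ∀ (S : Finset (Fin k)) (hS : S.card = u.length) (j : Fin u.length),
      (parts[((S.orderEmbOfFin hS j : Fin k) : ℕ)]'(hσlt S hS j)).idxOf (u.get j)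
        < (parts[((S.orderEmbOfFin hS j : Fin k) : ℕ)]'(hσlt S hS j)).length :=
    fun S hS j => List.idxOf_lt_length_iff.2 (hmempart S hS j)
  let pos : ∀ (S : Finset (Fin k)), S.card = u.length → Fin u.length → ℕ :=
    fun S hS j => (parts.take ((S.orderEmbOfFin hS j : Fin k) : ℕ)).flatten.length +
      (parts[((S.orderEmbOfFin hS j : Fin k) : ℕ)]'(hσlt S hS j)).idxOf (u.get j)
  have hposlt : ∀ (S : Finset (Fin k)) (hS : S.card = u.length) (j : Fin u.length),
      pos S hS j < w.length := by
    intro S hS j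
    have := pos_lt parts rest (hσlt S hS j) (hidx S hS j)
    rwa [← hdecomp] at this
  have hkey : ∀ (S T : Finset (Fin k)) (hS : S.card = u.length) (hT : T.card = u.length)
      (j j' : Fin u.length),
      ((S.orderEmbOfFin hS j : Fin k) : ℕ) < ((T.orderEmbOfFin hT j' : Fin k) : ℕ) →
      pos S hS j < pos T hT j' := by
    intro S T hS hT j j' hlt
    have h1 : pos S hS j
        < (parts.take (((S.orderEmbOfFin hS j : Fin k) : ℕ) + 1)).flatten.length := by
      rw [start_succ parts (hσlt S hS j)]
      exact Nat.add_lt_add_left (hidx S hS j) _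
    have h2 : (parts.take (((S.orderEmbOfFin hS j : Fin k) : ℕ) + 1)).flatten.length ≤
        (parts.take ((T.orderEmbOfFin hT j' : Fin k) : ℕ)).flatten.length :=
      start_mono parts (by omega)
    have h3 : (parts.take ((T.orderEmbOfFin hT j' : Fin k) : ℕ)).flatten.length
        ≤ pos T hT j' := Nat.le_add_right _ _
    omega
  let F : {S : Finset (Fin k) // S.card = u.length} → {e : Fin u.length → Fin w.length // e ∈ E} :=
    fun ⟨S, hS⟩ => ⟨fun j => ⟨pos S hS j, hposlt S hS j⟩, by
      constructor
      · intro j j' hjj'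
        have : ((S.orderEmbOfFin hS j : Fin k) : ℕ) < ((S.orderEmbOfFin hS j' : Fin k) : ℕ) := by
          exact_mod_cast (S.orderEmbOfFin hS).strictMono hjj'
        exact Fin.mk_lt_mk.2 (hkey S S hS hS j j' this)
      · intro j
        have h2 := pos_get parts rest (hσlt S hS j) (hidx S hS j)
        rw [List.getElem_idxOf (hidx S hS j)] at h2
        simp only [List.get_eq_getElem] at h2 ⊢
        rw [List.getElem_of_eq hdecomp]
        exact h2.symm⟩
  have hFinj : Function.Injective F := by
    rintro ⟨S, hS⟩ ⟨T, hT⟩ hST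
    have hv := congrArg Subtype.val hST
    have heq : ∀ j : Fin u.length, pos S hS j = pos T hT j :=
      fun j => congrArg Fin.val (congrFun hv j)
    have hσeq : ∀ j : Fin u.length,
        (S.orderEmbOfFin hS j : Fin k) = (T.orderEmbOfFin hT j : Fin k) := by
      intro j
      by_contra hne
      rcases Nat.lt_or_ge ((S.orderEmbOfFin hS j : Fin k) : ℕ)
          ((T.orderEmbOfFin hT j : Fin k) : ℕ) with h | h
      · exact absurd (heq j) (Nat.ne_of_lt (hkey S T hS hT j j h))
      · have h' : ((T.orderEmbOfFin hT j : Fin k) : ℕ)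
            < ((S.orderEmbOfFin hS j : Fin k) : ℕ) := by
          rcases Nat.lt_or_eq_of_le h with h | h
          · exact h
          · exact absurd (Fin.val_injective h.symm) hne
        exact absurd (heq j).symm (Nat.ne_of_lt (hkey T S hT hS j j h'))
    apply Subtype.ext
    apply Finset.coe_injective
    rw [← Finset.range_orderEmbOfFin S hS, ← Finset.range_orderEmbOfFin T hT]
    ext x
    simp only [Set.mem_range]
    constructor
    · rintro ⟨j, rfl⟩; exact ⟨j, (hσeq j).symm⟩
    · rintro ⟨j, rfl⟩; exact ⟨j, hσeq j⟩
  have hcard : Nat.choose k u.length = Fintype.card {S : Finset (Fin k) // S.card = u.length} := by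
    rw [Fintype.card_finset_len, Fintype.card_fin]
  calc Nat.choose k u.length
      = Fintype.card {S : Finset (Fin k) // S.card = u.length} := hcard
    _ ≤ Fintype.card {e : Fin u.length → Fin w.length // e ∈ E} :=
        Fintype.card_le_of_injective F hFinj
    _ = E.ncard := by
        rw [Set.ncard_eq_toFinset_card' E, Set.toFinset_card]
end

section
/- Let w be a word over Σ = alph(w) with ι(w) ≥ 2 and let u be a nonempty scattered factor of w with |u| < ι(w). If u[1] ≠ m(w)[1], then |C(w,u)| > 1. -/
/-- An arch factorisation of `w`: `w = ar_1 ⋯ ar_k · rest`, where every arch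
contains every letter of `alph w`, the last letter of each arch does not occur
elsewhere in that arch, and the rest does not contain all letters of `alph w`.
The universality index `ι(w)` equals the number of arches. -/
structure ArchFact {α : Type*} (w : List α) where
  arches : List (List α)
  rest : List α
  join_append : arches.flatten ++ rest = w
  arch_ne : ∀ a ∈ arches, a ≠ []
  arch_alph : ∀ a ∈ arches, ∀ b ∈ w, b ∈ a
  arch_last : ∀ a ∈ arches, ∀ h : a ≠ [], a.getLast h ∉ a.dropLast
  rest_proper : ∃ b ∈ w, b ∉ rest

/-- The modus `m(w)`: the word formed by the last letters of the arches. -/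
def ArchFact.modus {α : Type*} {w : List α} (F : ArchFact w) : List α :=
  F.arches.pmap (fun a (h : a ≠ []) => a.getLast h) F.arch_ne

/-! ### Auxiliary machinery -/

/-- `Interleave u v w` : `w` is an interleaving (shuffle) of `u` and `v`. -/
inductive Interleave {α : Type*} : List α → List α → List α → Prop
  | nil : Interleave [] [] []
  | left (a : α) {u v w : List α} : Interleave u v w → Interleave (a :: u) v (a :: w)
  | right (a : α) {u v w : List α} : Interleave u v w → Interleave u (a :: v) (a :: w)

theorem interleave_nil_left {α : Type*} (w : List α) : Interleave [] w w := by
  induction w with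
  | nil => exact .nil
  | cons a w ih => exact .right a ih

theorem Interleave.append {α : Type*} {u v w u' v' w' : List α}
    (h : Interleave u v w) (h' : Interleave u' v' w') :
    Interleave (u ++ u') (v ++ v') (w ++ w') := by
  induction h with
  | nil => exact h'
  | left a _ ih => exact .left a ih
  | right a _ ih => exact .right a ih

theorem sublist_interleave {α : Type*} {u w : List α} (h : u.Sublist w) :
    ∃ v, Interleave u v w := by
  induction h with
  | slnil => exact ⟨[], .nil⟩
  | cons a _ ih => obtain ⟨v, hv⟩ := ih; exact ⟨a :: v, .right a hv⟩
  | cons_cons a _ ih => obtain ⟨v, hv⟩ := ih; exact ⟨v, .left a hv⟩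

theorem Interleave.inShuffle {α : Type*} {u v w : List α} (h : Interleave u v w) :
    InShuffle u v w := by
  induction h with
  | nil =>
      exact ⟨rfl, Fin.elim0, Fin.elim0, ⟨fun a => a.elim0, fun i => i.elim0⟩,
        ⟨fun a => a.elim0, fun i => i.elim0⟩, fun i => i.elim0⟩
  | @left a u v w _ ih =>
      obtain ⟨hlen, e₁, e₂, ⟨m₁, g₁⟩, ⟨m₂, g₂⟩, hd⟩ := ih
      refine ⟨by simp [hlen]; omega, Fin.cases ⟨0, Nat.succ_pos _⟩ (fun i => (e₁ i).succ),
        fun j => (e₂ j).succ, ⟨?_, ?_⟩, ⟨?_, ?_⟩, ?_⟩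
      · intro i j hij
        induction i using Fin.cases with
        | zero =>
            induction j using Fin.cases with
            | zero => exact absurd hij (lt_irrefl _)
            | succ j => simpa using (e₁ j).succ_pos
        | succ i =>
            induction j using Fin.cases with
            | zero => exact absurd hij (by simp [Fin.lt_def])
            | succ j =>
                simp only [Fin.cases_succ]
                exact Fin.succ_lt_succ_iff.mpr (m₁ (by simpa [Fin.succ_lt_succ_iff] using hij))
      · intro i
        induction i using Fin.cases with
        | zero => simp
        | succ i => simpa using g₁ i
      · intro i j hij
        exact Fin.succ_lt_succ_iff.mpr (m₂ hij)
      · intro j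
        simpa using g₂ j
      · intro i j
        induction i using Fin.cases with
        | zero => simp [(Fin.succ_ne_zero _).symm]
        | succ i =>
            simp only [Fin.cases_succ]
            exact fun h => hd i j (Fin.succ_injective _ h)
  | @right a u v w _ ih =>
      obtain ⟨hlen, e₁, e₂, ⟨m₁, g₁⟩, ⟨m₂, g₂⟩, hd⟩ := ih
      refine ⟨by simp [hlen]; omega, fun i => (e₁ i).succ,
        Fin.cases ⟨0, Nat.succ_pos _⟩ (fun j => (e₂ j).succ), ⟨?_, ?_⟩, ⟨?_, ?_⟩, ?_⟩
      · intro i j hij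
        exact Fin.succ_lt_succ_iff.mpr (m₁ hij)
      · intro i
        simpa using g₁ i
      · intro i j hij
        induction i using Fin.cases with
        | zero =>
            induction j using Fin.cases with
            | zero => exact absurd hij (lt_irrefl _)
            | succ j => simpa using (e₂ j).succ_pos
        | succ i =>
            induction j using Fin.cases with
            | zero => exact absurd hij (by simp [Fin.lt_def])
            | succ j =>
                simp only [Fin.cases_succ]
                exact Fin.succ_lt_succ_iff.mpr (m₂ (by simpa [Fin.succ_lt_succ_iff] using hij))
      · intro j
        induction j using Fin.cases with
        | zero => simp
        | succ j => simpa using g₂ j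
      · intro i j
        induction j using Fin.cases with
        | zero => simp [Fin.succ_ne_zero]
        | succ j =>
            simp only [Fin.cases_succ]
            exact fun h => hd i j (Fin.succ_injective _ h)

theorem InShuffle.sublist_right {α : Type*} {u v w : List α} (h : InShuffle u v w) :
    v.Sublist w := by
  obtain ⟨-, e₁, e₂, -, ⟨m, g⟩, -⟩ := h
  rw [List.sublist_iff_exists_fin_orderEmbedding_get_eq]
  exact ⟨OrderEmbedding.ofStrictMono e₂ m, g⟩

theorem sublist_flatten_of_forall_mem {α : Type*} :
    ∀ (u : List α) (As : List (List α)), u.length ≤ As.length →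
      (∀ x ∈ u, ∀ A ∈ As, x ∈ A) → u.Sublist As.flatten
  | [], _, _, _ => List.nil_sublist _
  | x :: u, [], h, _ => absurd h (by simp)
  | x :: u, A :: As, h, hmem => by
      simp only [List.flatten_cons]
      have h1 : [x].Sublist A := List.singleton_sublist.mpr (hmem x (by simp) A (by simp))
      have h2 : u.Sublist As.flatten := sublist_flatten_of_forall_mem u As (by simpa using h)
        (fun y hy B hB => hmem y (by simp [hy]) B (by simp [hB]))
      simpa using h1.append h2

/-- If `ι(w) ≥ 2` (the arch factorisation has at least two arches), `u` is a
nonempty scattered factor of `w` with `|u| < ι(w)` and `u[1] ≠ m(w)[1]`, then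
`|C(w,u)| > 1`. -/
theorem stmt9 {α : Type*} (w : List α) (F : ArchFact w)
    (hk : 2 ≤ F.arches.length)
    (u : List α) (hu : u ≠ []) (husub : u.Sublist w)
    (hlen : u.length < F.arches.length)
    (m1 : α) (hm1 : F.modus.head? = some m1)
    (hhead : u.head hu ≠ m1) :
    1 < (CompSet w u).ncard := by
  classical
  obtain ⟨arches, rest, hjoin, hne, halph, hlast, hrest⟩ := F
  simp only [ArchFact.modus] at hm1
  cases arches with
  | nil => simp at hk
  | cons A₁ As =>
  cases u with
  | nil => exact absurd rfl hu
  | cons u1 u' =>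
  simp only [List.length_cons] at hk hlen
  have hA₁ne : A₁ ≠ [] := hne A₁ (by simp)
  simp only [List.pmap, List.head?_cons, Option.some_inj] at hm1
  -- hm1 : A₁.getLast _ = m1
  set m := A₁.getLast hA₁ne with hm
  have hu1 : u1 ≠ m1 := by simpa using hhead
  -- basic facts
  set tailw : List α := As.flatten ++ rest with htailw
  have hw : w = A₁ ++ tailw := by
    rw [← hjoin, List.flatten_cons, List.append_assoc]
  have hu1w : u1 ∈ w := husub.subset (by simp)
  have hu1A : u1 ∈ A₁ := halph A₁ (by simp) u1 hu1w
  have hDrop : A₁.dropLast ++ [m] = A₁ := List.dropLast_append_getLast hA₁ne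
  have hu1D : u1 ∈ A₁.dropLast := by
    rw [← hDrop] at hu1A
    rcases List.mem_append.mp hu1A with h | h
    · exact h
    · exact absurd (by simpa [hm1] using h) hu1
  obtain ⟨s, t, hst⟩ := List.append_of_mem hu1D
  -- embeddings of u and u' into the tail arches
  have hmemAll : ∀ x ∈ u1 :: u', ∀ A ∈ As, x ∈ A :=
    fun x hx A hA => halph A (by simp [hA]) x (husub.subset hx)
  have hsubu : (u1 :: u').Sublist As.flatten :=
    sublist_flatten_of_forall_mem _ _ (by simpa using Nat.lt_succ_iff.mp hlen) hmemAll
  have hsubu' : u'.Sublist As.flatten := (List.sublist_cons_self u1 u').trans hsubu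
  obtain ⟨v', hv'⟩ := sublist_interleave (hsubu.trans (List.sublist_append_left _ _))
  obtain ⟨v'', hv''⟩ := sublist_interleave (hsubu'.trans (List.sublist_append_left _ rest))
  -- two complements
  set vA : List α := A₁ ++ v' with hvA
  set vB : List α := (s ++ (t ++ [m])) ++ v'' with hvB
  have hA₁eq : A₁ = s ++ (u1 :: (t ++ [m])) := by
    rw [← hDrop, hst]; simp
  have hIA : Interleave (u1 :: u') vA w := by
    rw [hw]
    simpa using (interleave_nil_left A₁).append hv'
  have hIB : Interleave (u1 :: u') vB w := by
    rw [hw]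
    have part1 : Interleave [u1] (s ++ (t ++ [m])) A₁ := by
      rw [hA₁eq]
      simpa using (interleave_nil_left s).append
        (Interleave.left u1 (interleave_nil_left (t ++ [m])))
    rw [htailw, hvB]
    simpa using part1.append hv''
  have hAmem : vA ∈ CompSet w (u1 :: u') := hIA.inShuffle
  have hBmem : vB ∈ CompSet w (u1 :: u') := hIB.inShuffle
  -- the two complements are distinct
  have hmnot : m ∉ A₁.dropLast := hlast A₁ (by simp) hA₁ne
  have hlenD : A₁.dropLast.length = (s ++ (t ++ [m])).length := by
    simp [hst]
  have hne' : vA ≠ vB := by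
    intro hEq
    have h1 : vA.take A₁.dropLast.length = A₁.dropLast := by
      have hh : vA = A₁.dropLast ++ ([m] ++ v') := by rw [hvA, ← List.append_assoc, hDrop]
      rw [hh, List.take_left]
    have h2 : vB.take A₁.dropLast.length = s ++ (t ++ [m]) := by
      rw [hvB, hlenD, List.take_left]
    have : A₁.dropLast = s ++ (t ++ [m]) := by rw [← h1, hEq, h2]
    exact hmnot (by rw [this]; simp)
  -- finiteness of CompSet
  have hfin : (CompSet w (u1 :: u')).Finite := by
    apply (List.finite_toSet w.sublists).subset
    intro v hv
    exact List.mem_sublists.mpr (InShuffle.sublist_right hv)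
  rw [Set.one_lt_ncard hfin]
  exact ⟨vA, hAmem, vB, hBmem, hne'⟩
end

section
/- If w is a square-free word over Σ (w contains no factor of the form vv with v nonempty) and u is a scattered factor of w with at least two distinct embeddings in w, then |C(w,u)| > 1. -/
section Infra
variable {α : Type*}

/-- letters of a marked word selected at `true` marks -/
def selT (z : List (α × Bool)) : List α := (z.filter (fun p => p.2)).map Prod.fst
/-- letters of a marked word selected at `false` marks -/
def selF (z : List (α × Bool)) : List α := (z.filter (fun p => !p.2)).map Prod.fst

@[simp] lemma selT_nil : selT ([] : List (α × Bool)) = [] := rfl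
@[simp] lemma selF_nil : selF ([] : List (α × Bool)) = [] := rfl
@[simp] lemma selT_cons_true (a : α) (z : List (α × Bool)) :
    selT ((a, true) :: z) = a :: selT z := by simp [selT]
@[simp] lemma selT_cons_false (a : α) (z : List (α × Bool)) :
    selT ((a, false) :: z) = selT z := by simp [selT]
@[simp] lemma selF_cons_true (a : α) (z : List (α × Bool)) :
    selF ((a, true) :: z) = selF z := by simp [selF]
@[simp] lemma selF_cons_false (a : α) (z : List (α × Bool)) :
    selF ((a, false) :: z) = a :: selF z := by simp [selF]
@[simp] lemma selT_append (z₁ z₂ : List (α × Bool)) :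
    selT (z₁ ++ z₂) = selT z₁ ++ selT z₂ := by simp [selT]
@[simp] lemma selF_append (z₁ z₂ : List (α × Bool)) :
    selF (z₁ ++ z₂) = selF z₁ ++ selF z₂ := by simp [selF]
@[simp] lemma selT_map_false (l : List α) :
    selT (l.map (fun x => (x, false))) = [] := by induction l <;> simp_all
@[simp] lemma selF_map_false (l : List α) :
    selF (l.map (fun x => (x, false))) = l := by induction l <;> simp_all

lemma inShuffle_cons_left {u v w : List α} (a : α) (h : InShuffle u v w) :
    InShuffle (a :: u) v (a :: w) := by
  obtain ⟨hl, e₁, e₂, h₁, h₂, hd⟩ := h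
  refine ⟨by simp [hl]; omega, ?_, ?_, ⟨?_, ?_⟩, ⟨?_, ?_⟩, ?_⟩
  · exact Fin.cases (⟨0, Nat.succ_pos _⟩ : Fin (w.length + 1)) (fun j => (e₁ j).succ)
  · exact fun j => (e₂ j).succ
  · intro x y hxy
    induction x using Fin.cases with
    | zero =>
      induction y using Fin.cases with
      | zero => exact absurd hxy (lt_irrefl _)
      | succ j => simp [Fin.lt_def]
    | succ x =>
      induction y using Fin.cases with
      | zero => exact absurd hxy (by simp [Fin.lt_def])
      | succ j =>
        simp only [Fin.cases_succ]
        exact Fin.succ_lt_succ_iff.2 (h₁.1 (Fin.succ_lt_succ_iff.1 hxy))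
  · intro i
    induction i using Fin.cases with
    | zero => rfl
    | succ j => simpa using h₁.2 j
  · exact fun x y hxy => Fin.succ_lt_succ_iff.2 (h₂.1 hxy)
  · intro j; simpa using h₂.2 j
  · intro i j
    induction i using Fin.cases with
    | zero => simp [Fin.ext_iff]
    | succ x => simpa [Fin.ext_iff] using fun hx => hd x j (Fin.ext hx)

lemma inShuffle_cons_right {u v w : List α} (a : α) (h : InShuffle u v w) :
    InShuffle u (a :: v) (a :: w) :=
  inShuffle_swap (inShuffle_cons_left a (inShuffle_swap h))

lemma mask_inShuffle : ∀ z : List (α × Bool), InShuffle (selT z) (selF z) (z.map Prod.fst)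
  | [] => inShuffle_nil
  | (a, true) :: z => by simpa using inShuffle_cons_left a (mask_inShuffle z)
  | (a, false) :: z => by simpa using inShuffle_cons_right a (mask_inShuffle z)

lemma emb_sublist {w v : List α} {e : Fin v.length → Fin w.length}
    (h : IsEmbedding w v e) : v.Sublist w := by
  rw [List.sublist_iff_exists_fin_orderEmbedding_get_eq]
  exact ⟨OrderEmbedding.ofStrictMono e h.1, h.2⟩

lemma compSet_finite (w u : List α) : (CompSet w u).Finite := by
  apply Set.Finite.subset w.sublists.finite_toSet
  rintro v ⟨-, e₁, e₂, -, h₂, -⟩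
  simpa [List.mem_sublists] using emb_sublist h₂

lemma filter_finRange {m n : ℕ} (e : Fin m → Fin n) (he : StrictMono e) :
    (List.finRange n).filter (fun k => decide (∃ j, e j = k)) =
      (List.finRange m).map e := by
  refine (fun hp h1 h2 => List.Perm.eq_of_pairwise' (r := (· ≤ ·)) h1 h2 hp) ?_ ?_ ?_
  · rw [List.perm_ext_iff_of_nodup]
    · intro k
      simp [List.mem_filter, List.mem_finRange, eq_comm]
    · exact (List.nodup_finRange n).filter _
    · exact (List.nodup_finRange m).map he.injective
  · exact List.Pairwise.imp le_of_lt ((List.pairwise_lt_finRange n).filter _)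
  · exact List.Pairwise.imp le_of_lt
      (List.pairwise_map.2 ((List.pairwise_lt_finRange m).imp fun h => he h))

/-- the marked word recording which positions of `w` are hit by `e` -/
def emask (w u : List α) (e : Fin u.length → Fin w.length) : List (α × Bool) :=
  List.ofFn (fun k => (w.get k, decide (∃ j, e j = k)))

lemma emask_length (w u : List α) (e : Fin u.length → Fin w.length) :
    (emask w u e).length = w.length := by simp [emask]

lemma emask_map_fst (w u : List α) (e : Fin u.length → Fin w.length) :
    (emask w u e).map Prod.fst = w := by
  simp [emask, List.map_ofFn, Function.comp]
  exact List.ofFn_get w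

lemma emask_getElem (w u : List α) (e : Fin u.length → Fin w.length) (k : ℕ)
    (hk : k < w.length) :
    (emask w u e)[k]'(by simpa [emask_length] using hk) =
      (w.get ⟨k, hk⟩, decide (∃ j, e j = ⟨k, hk⟩)) := by
  simp [emask]

lemma selT_emask (w u : List α) (e : Fin u.length → Fin w.length)
    (h : IsEmbedding w u e) : selT (emask w u e) = u := by
  unfold selT emask
  rw [List.ofFn_eq_map, List.filter_map, List.map_map]
  have : ((fun p : α × Bool => p.2) ∘ fun k => (w.get k, decide (∃ j, e j = k)))
      = fun k => decide (∃ j, e j = k) := rfl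
  rw [this, filter_finRange e h.1, List.map_map]
  have : (Prod.fst ∘ (fun k => (w.get k, decide (∃ j, e j = k)))) ∘ e
      = fun j => u.get j := by
    funext j; exact (h.2 j).symm
  rw [this, ← List.ofFn_eq_map]
  exact List.ofFn_get u

lemma main_asym (w u : List α)
    (hsf : ¬ ∃ v : List α, v ≠ [] ∧ (v ++ v) <:+: w)
    (e₁ e₂ : Fin u.length → Fin w.length)
    (h₁ : IsEmbedding w u e₁) (h₂ : IsEmbedding w u e₂)
    (i : Fin u.length) (hlt : e₁ i < e₂ i)
    (hprev : ∀ j, j < i → e₁ j = e₂ j) :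
    1 < (CompSet w u).ncard := by
  classical
  set P : ℕ := (e₁ i : ℕ) with hP
  set Q : ℕ := (e₂ i : ℕ) with hQdef
  have hPQ : P < Q := hlt
  have hQ : Q < w.length := (e₂ i).isLt
  set a : α := w.get (e₂ i) with ha
  have hwP : w.get ⟨P, by omega⟩ = a := by
    show w.get (e₁ i) = w.get (e₂ i)
    rw [← h₁.2 i, ← h₂.2 i]
  have hQeta : (⟨Q, hQ⟩ : Fin w.length) = e₂ i := by ext; rfl
  have F1 : ∀ j, (e₂ j : ℕ) < P ∨ Q ≤ (e₂ j : ℕ) := by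
    intro j
    rcases lt_or_ge j i with hj | hj
    · left
      rw [← hprev j hj]
      exact h₁.1 hj
    · right
      exact h₂.1.monotone hj
  set z : List (α × Bool) := emask w u e₂ with hz
  have hz_len : z.length = w.length := emask_length w u e₂
  have hmapfst : z.map Prod.fst = w := emask_map_fst w u e₂
  have hselT : selT z = u := selT_emask w u e₂ h₂
  set M : List (α × Bool) := (z.drop P).take (Q - P) with hMdef
  set Wd : List α := (w.drop P).take (Q - P) with hWd
  set Wt : List α := (w.drop (P + 1)).take (Q - P) with hWt
  have hM_len : M.length = Q - P := by simp [hMdef, hz_len]; omega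
  have hWd_len : Wd.length = Q - P := by simp [hWd]; omega
  have hWt_len : Wt.length = Q - P := by simp [hWt]; omega
  have hdropQ : z.drop Q = (a, true) :: z.drop (Q + 1) := by
    rw [List.drop_eq_getElem_cons (by omega : Q < z.length)]
    congr 1
    rw [show (z[Q]'(by omega)) = (emask w u e₂)[Q]'(by rw [emask_length]; omega) from rfl,
      emask_getElem w u e₂ Q (by omega)]
    rw [Prod.mk.injEq]
    refine ⟨by rw [hQeta, ha], ?_⟩
    simp only [decide_eq_true_eq]
    exact ⟨i, hQeta.symm⟩
  have hdropP : z.drop P = M ++ z.drop Q := by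
    conv_lhs => rw [← List.take_append_drop (Q - P) (z.drop P)]
    congr 1
    rw [List.drop_drop]
    congr 1
    omega
  have hzdec : z = z.take P ++ (M ++ ((a, true) :: z.drop (Q + 1))) := by
    conv_lhs => rw [← List.take_append_drop P z]
    rw [hdropP, hdropQ]
  have hMshape : M = Wd.map (fun x => (x, false)) := by
    apply List.ext_getElem
    · rw [hM_len, List.length_map, hWd_len]
    · intro t h1 h2
      have ht : t < Q - P := by rwa [hM_len] at h1
      have htn : P + t < w.length := by omega
      have hMt : M[t]'h1 = z[P + t]'(by omega) := by
        simp only [hMdef, List.getElem_take, List.getElem_drop]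
      rw [hMt, show (z[P + t]'(by omega)) =
          (emask w u e₂)[P + t]'(by rw [emask_length]; omega) from rfl,
        emask_getElem w u e₂ (P + t) htn]
      rw [List.getElem_map]
      have hWdt : Wd[t]'(by rwa [hWd_len]) = w.get ⟨P + t, htn⟩ := by
        simp only [hWd, List.getElem_take, List.getElem_drop]
        rfl
      rw [hWdt]
      congr 1
      simp only [decide_eq_false_iff_not]
      rintro ⟨j, hj⟩
      have := F1 j
      rw [hj] at this
      simp only [Fin.val_mk] at this
      omega
  have hwdec : w = (z.take P).map Prod.fst ++ (Wd ++ (a :: (z.drop (Q + 1)).map Prod.fst)) := by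
    conv_lhs => rw [← hmapfst, hzdec]
    simp [hMshape, List.map_map, Function.comp_def]
  have hSshape : Wd ++ [a] = a :: Wt := by
    have hL : (w.drop P).take (Q - P + 1) = Wd ++ [a] := by
      have hdP : w.drop P = Wd ++ w.drop Q := by
        conv_lhs => rw [← List.take_append_drop (Q - P) (w.drop P)]
        congr 1
        rw [List.drop_drop]
        congr 1
        omega
      have hdQ : w.drop Q = a :: w.drop (Q + 1) := by
        rw [List.drop_eq_getElem_cons (by omega : Q < w.length)]
        congr 1
      rw [hdP, hdQ, List.take_append,
        List.take_of_length_le (by rw [hWd_len]; omega)]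
      congr 1
      rw [hWd_len, show Q - P + 1 - (Q - P) = 1 from by omega]
      simp
    have hR : (w.drop P).take (Q - P + 1) = a :: Wt := by
      rw [List.drop_eq_getElem_cons (by omega : P < w.length), List.take_succ_cons]
      congr 1
    rw [← hL, hR]
  set z₃ : List (α × Bool) :=
    z.take P ++ ((a, true) :: (Wt.map (fun x => (x, false)) ++ z.drop (Q + 1))) with hz3
  have hmap3 : z₃.map Prod.fst = w := by
    rw [hz3]
    conv_rhs => rw [hwdec]
    simp only [List.map_append, List.map_cons, List.map_map]
    rw [show Prod.fst ∘ (fun x : α => (x, false)) = id from rfl]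
    simp only [List.map_id]
    have : Wd ++ a :: (z.drop (Q + 1)).map Prod.fst
        = (Wd ++ [a]) ++ (z.drop (Q + 1)).map Prod.fst := by simp
    rw [this, hSshape]
    simp
  have hu2 : u = selT (z.take P) ++ (a :: selT (z.drop (Q + 1))) := by
    conv_lhs => rw [← hselT, hzdec]
    simp [hMshape]
  have hu3 : selT z₃ = u := by
    rw [hz3]
    simp only [selT_append, selT_cons_true, selT_map_false, List.nil_append]
    rw [hu2]
  have hv2 : selF z = selF (z.take P) ++ (Wd ++ selF (z.drop (Q + 1))) := by
    conv_lhs => rw [hzdec]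
    simp [hMshape]
  have hv3 : selF z₃ = selF (z.take P) ++ (Wt ++ selF (z.drop (Q + 1))) := by
    rw [hz3]
    simp
  have mem₂ : selF z ∈ CompSet w u := by
    have := mask_inShuffle z
    rw [hmapfst, hselT] at this
    exact this
  have mem₃ : selF z₃ ∈ CompSet w u := by
    have := mask_inShuffle z₃
    rw [hmap3, hu3] at this
    exact this
  by_cases hv : selF z = selF z₃
  · exfalso
    rw [hv2, hv3] at hv
    have hWdWt : Wd = Wt :=
      List.append_cancel_right (List.append_cancel_left hv)
    have h01 : w[P]'(by omega) = w[P + 1]'(by omega) := by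
      have h0d : Wd[0]'(by rw [hWd_len]; omega) = w[P]'(by omega) := by
        simp only [hWd, List.getElem_take, List.getElem_drop, Nat.add_zero]
      have h0t : Wt[0]'(by rw [hWt_len]; omega) = w[P + 1]'(by omega) := by
        simp only [hWt, List.getElem_take, List.getElem_drop, Nat.add_zero]
      have h00 : Wd[0]'(by rw [hWd_len]; omega) = Wt[0]'(by rw [hWt_len]; omega) := by
        simp only [hWdWt]
      exact h0d.symm.trans (h00.trans h0t)
    apply hsf
    refine ⟨[w[P]'(by omega)], by simp, w.take P, w.drop (P + 2), ?_⟩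
    have hd1 : w.drop P = w[P]'(by omega) :: w.drop (P + 1) :=
      List.drop_eq_getElem_cons (by omega)
    have hd2 : w.drop (P + 1) = w[P + 1]'(by omega) :: w.drop (P + 2) :=
      List.drop_eq_getElem_cons (by omega)
    conv_rhs => rw [← List.take_append_drop P w, hd1, hd2, ← h01]
    simp
  · rw [Set.one_lt_ncard_iff (compSet_finite w u)]
    exact ⟨selF z, selF z₃, mem₂, mem₃, hv⟩

end Infra

/-- If `w` is square-free and the scattered factor `u` of `w` has at least two
distinct embeddings in `w`, then `|C(w,u)| > 1`. -/
theorem stmt14 {α : Type*} (w : List α)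
    (hsf : ¬ ∃ v : List α, v ≠ [] ∧ (v ++ v) <:+: w)
    (u : List α) (hu : u.Sublist w)
    (e₁ e₂ : Fin u.length → Fin w.length)
    (h₁ : IsEmbedding w u e₁) (h₂ : IsEmbedding w u e₂) (hne : e₁ ≠ e₂) :
    1 < (CompSet w u).ncard := by
  classical
  have hex : ∃ k : ℕ, ∃ h : k < u.length, e₁ ⟨k, h⟩ ≠ e₂ ⟨k, h⟩ := by
    by_contra hcon
    push_neg at hcon
    exact hne (funext fun j => hcon j.1 j.2)
  obtain ⟨hk, hkne⟩ := Nat.find_spec hex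
  set i : Fin u.length := ⟨Nat.find hex, hk⟩ with hi
  have hprev : ∀ j, j < i → e₁ j = e₂ j := by
    intro j hj
    have hjlt : (j : ℕ) < Nat.find hex := hj
    have := Nat.find_min hex hjlt
    push_neg at this
    have h' := this j.isLt
    rwa [show (⟨(j : ℕ), j.isLt⟩ : Fin u.length) = j from Fin.ext rfl] at h'
  rcases lt_trichotomy (e₁ i) (e₂ i) with hlt | heq | hgt
  · exact main_asym w u hsf e₁ e₂ h₁ h₂ i hlt hprev
  · exact absurd heq hkne
  · exact main_asym w u hsf e₂ e₁ h₂ h₁ i hgt (fun j hj => (hprev j hj).symm)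
end

section
/- For a word w over Σ the following are equivalent: (i) w contains no letter square (no factor aa for a letter a ∈ Σ); (ii) every scattered factor u of w with |C(w,u)| = 1 has exactly one embedding in w. -/
open List

section Aux

variable {α : Type*}

/-- the subword of `w` selected by the positions of the mask `s` carrying value `c`. -/
def msel (c : Bool) (w : List α) (s : List Bool) : List α :=
  ((w.zip s).filter (fun p => p.2 == c)).map Prod.fst

@[simp] lemma msel_nil (c : Bool) (s : List Bool) : msel c ([] : List α) s = [] := rfl

@[simp] lemma msel_nil' (c : Bool) (w : List α) : msel c w [] = [] := by
  simp [msel]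

lemma msel_cons (c : Bool) (x : α) (w : List α) (b : Bool) (s : List Bool) :
    msel c (x :: w) (b :: s) = if b == c then x :: msel c w s else msel c w s := by
  simp only [msel, zip_cons_cons, filter_cons]
  split <;> simp_all

@[simp] lemma msel_tt (x : α) (w : List α) (s : List Bool) :
    msel true (x :: w) (true :: s) = x :: msel true w s := by simp [msel_cons]

@[simp] lemma msel_tf (x : α) (w : List α) (s : List Bool) :
    msel true (x :: w) (false :: s) = msel true w s := by simp [msel_cons]

@[simp] lemma msel_ft (x : α) (w : List α) (s : List Bool) :
    msel false (x :: w) (true :: s) = msel false w s := by simp [msel_cons]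

@[simp] lemma msel_ff (x : α) (w : List α) (s : List Bool) :
    msel false (x :: w) (false :: s) = x :: msel false w s := by simp [msel_cons]

lemma msel_append (c : Bool) (w₁ w₂ : List α) (s₁ s₂ : List Bool)
    (h : s₁.length = w₁.length) :
    msel c (w₁ ++ w₂) (s₁ ++ s₂) = msel c w₁ s₁ ++ msel c w₂ s₂ := by
  simp [msel, zip_append h.symm, filter_append]

lemma msel_replicate_true (w : List α) : msel true w (replicate w.length true) = w := by
  induction w with
  | nil => rfl
  | cons x w ih => simpa [replicate_succ] using ih

lemma msel_replicate_false (w : List α) : msel false w (replicate w.length true) = [] := by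
  induction w with
  | nil => rfl
  | cons x w ih => simpa [replicate_succ] using ih

lemma msel_perm : ∀ (w : List α) (s : List Bool), s.length = w.length →
    (msel true w s ++ msel false w s).Perm w := by
  intro w
  induction w with
  | nil => intro s _; simp
  | cons x w ih =>
    intro s hs
    cases s with
    | nil => simp at hs
    | cons b s =>
      simp only [length_cons, Nat.succ.injEq] at hs
      cases b with
      | true => simpa using (ih s hs).cons x
      | false =>
        simp only [msel_tf, msel_ff]
        exact (perm_middle).trans ((ih s hs).cons x)

/-- flip the first `true` of a mask to `false`. -/
def mflip : List Bool → List Bool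
  | [] => []
  | true :: s => false :: s
  | false :: s => false :: mflip s

@[simp] lemma mflip_nil : mflip [] = [] := rfl
@[simp] lemma mflip_true (s : List Bool) : mflip (true :: s) = false :: s := rfl
@[simp] lemma mflip_false (s : List Bool) : mflip (false :: s) = false :: mflip s := rfl

@[simp] lemma mflip_length : ∀ s : List Bool, (mflip s).length = s.length
  | [] => rfl
  | true :: s => rfl
  | false :: s => by simp [mflip_length s]

lemma msel_true_mflip : ∀ (w : List α) (s : List Bool) (c : α) (U : List α),
    msel true w s = c :: U → msel true w (mflip s) = U := by
  intro w
  induction w with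
  | nil => intro s c U h; simp at h
  | cons d w ih =>
    intro s c U h
    cases s with
    | nil => simp at h
    | cons b s =>
      cases b with
      | true =>
        simp only [msel_tt] at h
        simp only [mflip_true, msel_tf]
        injection h
      | false =>
        simp only [msel_tf] at h
        simpa using ih s c U h

lemma msel_false_mflip_head (d : α) (w : List α) (s : List Bool) {c : α} {U : List α}
    (h : msel true (d :: w) s = c :: U) :
    ∃ r, msel false (d :: w) (mflip s) = d :: r := by
  cases s with
  | nil => simp at h
  | cons b s =>
    cases b with
    | true => exact ⟨msel false w s, by simp⟩
    | false => exact ⟨msel false w (mflip s), by simp⟩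

lemma mixed (c : α) (w' : List α) (s₂ : List Bool) (U : List α)
    (hch : (c :: w').Chain' (· ≠ ·)) (hlen : s₂.length = w'.length)
    (hsel : msel true w' s₂ = c :: U) :
    ∃ t : List Bool, t.length = w'.length + 1 ∧ msel true (c :: w') t = c :: U ∧
      ∀ V, msel false (c :: w') t ≠ c :: V := by
  cases w' with
  | nil => simp at hsel
  | cons d w'' =>
    have hcd : c ≠ d := (isChain_cons_cons.mp hch).1
    refine ⟨true :: mflip s₂, by simp [hlen], ?_, ?_⟩
    · simp [msel_true_mflip _ _ _ _ hsel]
    · intro V hV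
      obtain ⟨r, hr⟩ := msel_false_mflip_head d w'' s₂ hsel
      rw [show msel false (c :: d :: w'') (true :: mflip s₂)
            = msel false (d :: w'') (mflip s₂) from by simp, hr] at hV
      injection hV with h1 _
      exact hcd h1.symm

lemma key : ∀ (w : List α) (s s' : List Bool), w.Chain' (· ≠ ·) →
    s.length = w.length → s'.length = w.length → s ≠ s' →
    msel true w s = msel true w s' → msel false w s = msel false w s' →
    ∃ t, t.length = w.length ∧ msel true w t = msel true w s ∧
      msel false w t ≠ msel false w s := by
  intro w
  induction w with
  | nil =>
    intro s s' _ hs hs' hne _ _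
    exact absurd ((List.length_eq_zero_iff.mp hs).trans (List.length_eq_zero_iff.mp hs').symm) hne
  | cons c w' ih =>
    intro s s' hch hs hs' hne hT hF
    cases s with
    | nil => simp at hs
    | cons b s₁ =>
      cases s' with
      | nil => simp at hs'
      | cons b' s₂ =>
        simp only [length_cons, Nat.succ.injEq] at hs hs'
        have hch' : w'.Chain' (· ≠ ·) := hch.tail
        cases b with
        | true =>
          cases b' with
          | true =>
            simp only [msel_tt, msel_ft] at hT hF
            injection hT with hc hAB
            have hne' : s₁ ≠ s₂ := fun h => hne (by rw [h])
            obtain ⟨t, htl, htT, htF⟩ := ih s₁ s₂ hch' hs hs' hne' hAB hF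
            exact ⟨true :: t, by simp [htl], by simp [htT], by simpa using htF⟩
          | false =>
            -- s starts true, s' starts false
            simp only [msel_tt, msel_tf, msel_ft, msel_ff] at hT hF
            obtain ⟨t, htl, htT, htF⟩ := mixed c w' s₂ (msel true w' s₁) hch hs' hT.symm
            refine ⟨t, by simpa using htl, by simpa using htT, ?_⟩
            rw [show msel false (c :: w') (true :: s₁) = msel false w' s₁ from by simp, hF]
            exact htF _
        | false =>
          cases b' with
          | true =>
            -- s starts false, s' starts true
            simp only [msel_tt, msel_tf, msel_ft, msel_ff] at hT hF
            obtain ⟨t, htl, htT, htF⟩ := mixed c w' s₁ (msel true w' s₂) hch hs hT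
            refine ⟨t, by simpa using htl, ?_, ?_⟩
            · rw [show msel true (c :: w') (false :: s₁) = msel true w' s₁ from by simp, hT]
              exact htT
            · rw [show msel false (c :: w') (false :: s₁)
                    = c :: msel false w' s₁ from by simp]
              exact htF _
          | false =>
            simp only [msel_tf, msel_ff] at hT hF
            injection hF with hc hAB
            have hne' : s₁ ≠ s₂ := fun h => hne (by rw [h])
            obtain ⟨t, htl, htT, htF⟩ := ih s₁ s₂ hch' hs hs' hne' hT hAB
            refine ⟨false :: t, by simp [htl], by simp [htT], ?_⟩
            simp only [msel_ff]
            intro h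
            injection h with hc h2
            exact htF h2

end Aux

section Bridge

variable {α : Type*}

lemma msel_map_finRange (w : List α) (P : Fin w.length → Bool) (c : Bool) :
    msel c w ((finRange w.length).map P) =
      ((finRange w.length).filter (fun i => P i == c)).map w.get := by
  have h1 := zip_map' (f := w.get) (g := P) (l := finRange w.length)
  rw [map_get_finRange] at h1
  rw [msel, h1, List.filter_map, List.map_map]
  rfl

instance (n : ℕ) : IsAntisymm (Fin n) (· < ·) := ⟨fun a b h h' => absurd h' (lt_asymm h)⟩

lemma filter_range_eq_map {m n : ℕ} (e : Fin m → Fin n) (he : StrictMono e) :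
    (finRange n).filter (fun i => decide (∃ j, e j = i)) = (finRange m).map e := by
  have hs1 : ((finRange n).filter (fun i => decide (∃ j, e j = i))).Pairwise (· < ·) :=
    (pairwise_lt_finRange n).filter _
  have hs2 : ((finRange m).map e).Pairwise (· < ·) :=
    (pairwise_lt_finRange m).map e (fun _ _ hab => he hab)
  have nd1 : ((finRange n).filter (fun i => decide (∃ j, e j = i))).Nodup :=
    hs1.imp (fun h => ne_of_lt h)
  have nd2 : ((finRange m).map e).Nodup := hs2.imp (fun h => ne_of_lt h)
  have hmem : ∀ x : Fin n, (x ∈ (finRange n).filter (fun i => decide (∃ j, e j = i)))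
      ↔ x ∈ (finRange m).map e := by
    intro x
    simp [List.mem_filter, List.mem_map, List.mem_finRange, eq_comm]
  exact List.Perm.eq_of_pairwise (fun a b _ _ h h' => absurd h' (lt_asymm h)) hs1 hs2
    ((List.subperm_of_subset nd1 (fun x hx => (hmem x).mp hx)).antisymm
      (List.subperm_of_subset nd2 (fun x hx => (hmem x).mpr hx)))

lemma mask_getD_eq (s : List Bool) (w : List α) (h : s.length = w.length) :
    s = (finRange w.length).map (fun i : Fin w.length => s.getD i.val false) := by
  apply List.ext_get (by simp [h])
  intro n h1 h2
  simp only [List.get_eq_getElem, List.getElem_map, List.getElem_finRange, Fin.cast_mk]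
  rw [List.getD_eq_getElem s false (by omega)]

lemma msel_eq_filter (c : Bool) (w : List α) (s : List Bool) (h : s.length = w.length) :
    msel c w s = ((finRange w.length).filter
        (fun i => s.getD i.val false == c)).map w.get := by
  calc msel c w s
      = msel c w ((finRange w.length).map fun i : Fin w.length => s.getD i.val false) := by
        rw [← mask_getD_eq s w h]
    _ = _ := msel_map_finRange w _ c

lemma mask_emb (c : Bool) (w : List α) (s : List Bool) (u : List α)
    (h : s.length = w.length) (hu : msel c w s = u) :
    ∃ e : Fin u.length → Fin w.length, IsEmbedding w u e ∧
      ∀ i : Fin w.length, (∃ j, e j = i) ↔ s.getD i.val false = c := by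
  subst hu
  set L := (finRange w.length).filter (fun i => s.getD i.val false == c) with hL
  have husel : msel c w s = L.map w.get := msel_eq_filter c w s h
  have hlen : (msel c w s).length = L.length := by rw [husel, length_map]
  have hsort : L.Pairwise (· < ·) := (pairwise_lt_finRange _).filter _
  refine ⟨fun j => L.get (Fin.cast hlen j), ⟨?_, ?_⟩, ?_⟩
  · intro a b hab
    exact hsort.sortedLT.strictMono_get hab
  · intro i
    rw [List.get_of_eq husel i, List.get_eq_getElem, List.getElem_map]
    rfl
  · intro i
    constructor
    · rintro ⟨j, rfl⟩
      have hmem : L.get (Fin.cast hlen j) ∈ (finRange w.length).filter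
          (fun i => s.getD i.val false == c) := List.mem_iff_get.mpr ⟨_, rfl⟩
      have h2 := (List.mem_filter.mp hmem).2
      show s.getD (L.get (Fin.cast hlen j)).val false = c
      simpa using h2
    · intro hgd
      have hmem : i ∈ L := by
        rw [hL]
        refine List.mem_filter.mpr ⟨List.mem_finRange i, ?_⟩
        show (s.getD i.val false == c) = true
        rw [hgd]
        exact beq_self_eq_true c
      obtain ⟨k, hk⟩ := List.mem_iff_get.mp hmem
      exact ⟨Fin.cast hlen.symm k, by simpa using hk⟩

lemma mask_inShuffle_s15 (w : List α) (s : List Bool) (u v : List α)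
    (h : s.length = w.length) (hu : msel true w s = u) (hv : msel false w s = v) :
    InShuffle u v w := by
  obtain ⟨e₁, he₁, hr₁⟩ := mask_emb true w s u h hu
  obtain ⟨e₂, he₂, hr₂⟩ := mask_emb false w s v h hv
  refine ⟨?_, e₁, e₂, he₁, he₂, ?_⟩
  · have hl := (msel_perm w s h).length_eq
    rw [length_append, hu, hv] at hl
    omega
  · intro i j hij
    have h1 : s.getD (e₁ i).val false = true := (hr₁ (e₁ i)).mp ⟨i, rfl⟩
    have h2 : s.getD (e₂ j).val false = false := (hr₂ (e₂ j)).mp ⟨j, rfl⟩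
    rw [hij, h2] at h1
    exact Bool.noConfusion h1

lemma emb_mask {w u : List α} (e : Fin u.length → Fin w.length) (he : IsEmbedding w u e) :
    msel true w ((finRange w.length).map (fun i => decide (∃ j, e j = i))) = u := by
  rw [msel_map_finRange]
  have h1 : ((finRange w.length).filter (fun i => decide (∃ j, e j = i) == true))
      = (finRange w.length).filter (fun i => decide (∃ j, e j = i)) :=
    List.filter_congr (fun x _ => by simp)
  rw [h1, filter_range_eq_map e he.1, List.map_map]
  have h2 : w.get ∘ e = u.get := funext fun i => (he.2 i).symm
  rw [h2, map_get_finRange]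

lemma inShuffle_mask {u v w : List α} (hs : InShuffle u v w) :
    ∃ s : List Bool, s.length = w.length ∧ msel true w s = u ∧ msel false w s = v := by
  obtain ⟨hlen, e₁, e₂, he₁, he₂, hd⟩ := hs
  refine ⟨(finRange w.length).map (fun i => decide (∃ j, e₁ j = i)), by simp,
    emb_mask e₁ he₁, ?_⟩
  have hcomp : ∀ i : Fin w.length, (¬ ∃ j, e₁ j = i) ↔ (∃ j, e₂ j = i) := by
    intro i
    constructor
    · intro hni
      have hA : (Finset.univ.image e₁).card = u.length := by
        rw [Finset.card_image_of_injective _ he₁.1.injective, Finset.card_univ,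
          Fintype.card_fin]
      have hB : (Finset.univ.image e₂).card = v.length := by
        rw [Finset.card_image_of_injective _ he₂.1.injective, Finset.card_univ,
          Fintype.card_fin]
      have hdisj : Disjoint (Finset.univ.image e₁) (Finset.univ.image e₂) := by
        rw [Finset.disjoint_left]
        rintro a ha hb
        obtain ⟨i1, _, rfl⟩ := Finset.mem_image.mp ha
        obtain ⟨j1, _, hj⟩ := Finset.mem_image.mp hb
        exact hd i1 j1 hj.symm
      have huniv : (Finset.univ.image e₁) ∪ (Finset.univ.image e₂) = Finset.univ := by
        apply Finset.eq_univ_of_card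
        rw [Finset.card_union_of_disjoint hdisj, hA, hB, Fintype.card_fin, hlen]
      have hin : i ∈ (Finset.univ.image e₁) ∪ (Finset.univ.image e₂) := by
        rw [huniv]; exact Finset.mem_univ i
      rcases Finset.mem_union.mp hin with hmi | hmi
      · obtain ⟨j, _, hj⟩ := Finset.mem_image.mp hmi
        exact absurd ⟨j, hj⟩ hni
      · obtain ⟨j, _, hj⟩ := Finset.mem_image.mp hmi
        exact ⟨j, hj⟩
    · rintro ⟨j, rfl⟩ ⟨i1, hi⟩
      exact hd i1 j hi
  rw [msel_map_finRange]
  have h1 : (finRange w.length).filter (fun i => decide (∃ j, e₁ j = i) == false)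
      = (finRange w.length).filter (fun i => decide (∃ j, e₂ j = i)) := by
    apply List.filter_congr
    intro x _
    by_cases hx : ∃ j, e₂ j = x
    · simp [hx, (hcomp x).mpr hx]
    · have hA : ∃ j, e₁ j = x := by
        by_contra hn
        exact hx ((hcomp x).mp hn)
      simp [hA, hx]
  rw [h1, filter_range_eq_map e₂ he₂.1, List.map_map]
  have h2 : w.get ∘ e₂ = v.get := funext fun i => (he₂.2 i).symm
  rw [h2, map_get_finRange]

lemma emb_mask_inj {w u : List α} {e e' : Fin u.length → Fin w.length}
    (he : StrictMono e) (he' : StrictMono e')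
    (h : (finRange w.length).map (fun i => decide (∃ j, e j = i))
       = (finRange w.length).map (fun i => decide (∃ j, e' j = i))) : e = e' := by
  have hp : ∀ i : Fin w.length, decide (∃ j, e j = i) = decide (∃ j, e' j = i) :=
    fun i => List.map_inj_left.mp h i (mem_finRange i)
  have hf : (finRange w.length).filter (fun i => decide (∃ j, e j = i))
      = (finRange w.length).filter (fun i => decide (∃ j, e' j = i)) :=
    List.filter_congr (fun x _ => hp x)
  have hm : (finRange u.length).map e = (finRange u.length).map e' := by
    rw [← filter_range_eq_map e he, ← filter_range_eq_map e' he', hf]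
  funext i
  exact List.map_inj_left.mp hm i (mem_finRange i)

lemma exists_square_of_not_chain : ∀ (w : List α), ¬ w.Chain' (· ≠ ·) →
    ∃ a, [a, a] <:+: w := by
  intro w
  induction w with
  | nil => intro h; exact absurd List.isChain_nil h
  | cons c w' ih =>
    intro h
    cases w' with
    | nil => exact absurd (List.isChain_singleton c) h
    | cons d w'' =>
      by_cases hcd : c = d
      · exact ⟨c, [], w'', by simp [hcd]⟩
      · obtain ⟨a, x, y, hxy⟩ := ih (fun hch => h (isChain_cons_cons.mpr ⟨hcd, hch⟩))
        exact ⟨a, c :: x, y, by rw [← hxy]; simp⟩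

end Bridge

/-- `w` contains no letter square iff every scattered factor `u` of `w` with
`|C(w,u)| = 1` has exactly one embedding in `w`. -/
theorem stmt15 {α : Type*} (w : List α) :
    (¬ ∃ a : α, [a, a] <:+: w) ↔
      ∀ u : List α, u.Sublist w → (CompSet w u).ncard = 1 →
        {e : Fin u.length → Fin w.length | IsEmbedding w u e}.ncard = 1 := by
  constructor
  · intro hnsq u hsub hC
    have hch : w.Chain' (· ≠ ·) := by
      by_contra hcc
      exact hnsq (exists_square_of_not_chain w hcc)
    obtain ⟨v₀, hC0⟩ := Set.ncard_eq_one.mp hC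
    have hv₀ : InShuffle u v₀ w := by
      have hmem : v₀ ∈ CompSet w u := by rw [hC0]; exact Set.mem_singleton v₀
      exact hmem
    obtain ⟨s₀, hs₀len, hs₀T, hs₀F⟩ := inShuffle_mask hv₀
    obtain ⟨e₀, he₀, -⟩ := mask_emb true w s₀ u hs₀len hs₀T
    have hmemF : ∀ s : List Bool, s.length = w.length → msel true w s = u →
        msel false w s = v₀ := by
      intro s hs hT
      have h1 : msel false w s ∈ CompSet w u :=
        mask_inShuffle_s15 w s u (msel false w s) hs hT rfl
      rw [hC0] at h1
      exact h1
    have huniq : ∀ e : Fin u.length → Fin w.length, IsEmbedding w u e → e = e₀ := by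
      intro e he
      by_contra hne
      have hm1 := emb_mask e he
      have hm2 := emb_mask e₀ he₀
      have hl1 : ((finRange w.length).map (fun i => decide (∃ j, e j = i))).length
          = w.length := by simp
      have hl2 : ((finRange w.length).map (fun i => decide (∃ j, e₀ j = i))).length
          = w.length := by simp
      have hF1 := hmemF _ hl1 hm1
      have hF2 := hmemF _ hl2 hm2
      have hmne : (finRange w.length).map (fun i => decide (∃ j, e j = i))
          ≠ (finRange w.length).map (fun i => decide (∃ j, e₀ j = i)) :=
        fun hm => hne (emb_mask_inj he.1 he₀.1 hm)
      obtain ⟨t, htl, htT, htF⟩ := key w _ _ hch hl1 hl2 hmne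
        (hm1.trans hm2.symm) (hF1.trans hF2.symm)
      rw [hm1] at htT
      exact htF ((hmemF t htl htT).trans hF1.symm)
    rw [Set.ncard_eq_one]
    exact ⟨e₀, Set.eq_singleton_iff_unique_mem.mpr ⟨he₀, fun e he => huniq e he⟩⟩
  · rintro hrhs ⟨a, x, t, hxt⟩
    have hw2 : x ++ a :: a :: t = w := by simpa using hxt
    subst hw2
    have hsub : (x ++ a :: t).Sublist (x ++ a :: a :: t) :=
      (List.sublist_cons_self a (a :: t)).append_left x
    set s₁ : List Bool :=
      List.replicate x.length true ++ true :: false :: List.replicate t.length true with hs₁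
    set s₂ : List Bool :=
      List.replicate x.length true ++ false :: true :: List.replicate t.length true with hs₂
    have hs₁len : s₁.length = (x ++ a :: a :: t).length := by simp [hs₁]
    have hs₂len : s₂.length = (x ++ a :: a :: t).length := by simp [hs₂]
    have hT₁ : msel true (x ++ a :: a :: t) s₁ = x ++ a :: t := by
      rw [hs₁, msel_append true x (a :: a :: t) _ _ (by simp), msel_replicate_true]
      simp [msel_replicate_true t]
    have hT₂ : msel true (x ++ a :: a :: t) s₂ = x ++ a :: t := by
      rw [hs₂, msel_append true x (a :: a :: t) _ _ (by simp), msel_replicate_true]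
      simp [msel_replicate_true t]
    have hF₁ : msel false (x ++ a :: a :: t) s₁ = [a] := by
      rw [hs₁, msel_append false x (a :: a :: t) _ _ (by simp), msel_replicate_false]
      simp [msel_replicate_false t]
    have hCeq : CompSet (x ++ a :: a :: t) (x ++ a :: t) = {[a]} := by
      apply Set.eq_singleton_iff_unique_mem.mpr
      constructor
      · exact mask_inShuffle_s15 _ s₁ _ _ hs₁len hT₁ hF₁
      · intro v hv
        have hvs : InShuffle (x ++ a :: t) v (x ++ a :: a :: t) := hv
        obtain ⟨s, hslen, hsT, hsF⟩ := inShuffle_mask hvs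
        have hlenv : v.length = 1 := by
          have hl := hvs.1
          simp [length_append] at hl
          omega
        obtain ⟨b, rfl⟩ := List.length_eq_one_iff.mp hlenv
        have hperm := msel_perm _ s hslen
        rw [hsT, hsF] at hperm
        have h1 : ((a :: t) ++ [b]).Perm (a :: a :: t) :=
          (List.perm_append_left_iff x).mp (by simpa [List.append_assoc] using hperm)
        have h2 : (t ++ [b]).Perm (a :: t) := by
          have h1' : (a :: (t ++ [b])).Perm (a :: (a :: t)) := by simpa using h1
          exact h1'.cons_inv
        have h3 : (t ++ [b]).Perm (t ++ [a]) :=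
          h2.trans (List.perm_append_comm (l₁ := [a]) (l₂ := t))
        have h4 : ([b] : List α).Perm [a] := (List.perm_append_left_iff t).mp h3
        have hb : b ∈ ([a] : List α) := h4.mem_iff.mp (by simp)
        simpa using hb
    have hC : (CompSet (x ++ a :: a :: t) (x ++ a :: t)).ncard = 1 := by
      rw [hCeq]; exact Set.ncard_singleton _
    have hemb := hrhs (x ++ a :: t) hsub hC
    obtain ⟨estar, hestar⟩ := Set.ncard_eq_one.mp hemb
    obtain ⟨e₁, he₁, hr₁⟩ := mask_emb true _ s₁ _ hs₁len hT₁
    obtain ⟨e₂, he₂, hr₂⟩ := mask_emb true _ s₂ _ hs₂len hT₂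
    have he₁' : e₁ = estar := by
      have hm : e₁ ∈ {e | IsEmbedding (x ++ a :: a :: t) (x ++ a :: t) e} := he₁
      rw [hestar] at hm; exact hm
    have he₂' : e₂ = estar := by
      have hm : e₂ ∈ {e | IsEmbedding (x ++ a :: a :: t) (x ++ a :: t) e} := he₂
      rw [hestar] at hm; exact hm
    have hix : x.length < (x ++ a :: a :: t).length := by simp
    have hg₁ : s₁.getD x.length false = true := by
      rw [hs₁, List.getD_append_right _ _ _ _ (by simp)]
      simp
    have hg₂ : s₂.getD x.length false = false := by
      rw [hs₂, List.getD_append_right _ _ _ _ (by simp)]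
      simp
    have hex : ∃ j, e₁ j = ⟨x.length, hix⟩ :=
      (hr₁ ⟨x.length, hix⟩).mpr (by simpa using hg₁)
    rw [he₁', ← he₂'] at hex
    have hq := (hr₂ ⟨x.length, hix⟩).mp hex
    simp only [Fin.val_mk] at hq
    rw [hg₂] at hq
    exact Bool.noConfusion hq
end

section
/- For every word v over Σ and every w ∈ v ⧢ v, there exist embeddings e1, e2 of v in w whose images are disjoint (hence partition {1,...,|w|}) such that e1(k) < e2(k) for all k ∈ {1,...,|v|}. -/
/-- For every `w ∈ v ⧢ v` there are disjoint embeddings `e₁, e₂` of `v` in `w`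
with `e₁ k < e₂ k` for all `k`. -/
theorem stmt16 {α : Type*} (v w : List α) (h : InShuffle v v w) :
    ∃ (e₁ e₂ : Fin v.length → Fin w.length),
      IsEmbedding w v e₁ ∧ IsEmbedding w v e₂ ∧ (∀ i j, e₁ i ≠ e₂ j) ∧
        ∀ k : Fin v.length, e₁ k < e₂ k := by
  obtain ⟨hlen, e₁, e₂, ⟨h1m, h1v⟩, ⟨h2m, h2v⟩, hd⟩ := h
  refine ⟨fun k => min (e₁ k) (e₂ k), fun k => max (e₁ k) (e₂ k), ⟨?_, ?_⟩, ⟨?_, ?_⟩, ?_, ?_⟩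
  · intro i j hij
    exact lt_min ((min_le_left _ _).trans_lt (h1m hij))
      ((min_le_right _ _).trans_lt (h2m hij))
  · intro i
    rcases min_cases (e₁ i) (e₂ i) with ⟨hm, _⟩ | ⟨hm, _⟩ <;> simp only [hm]
    · exact h1v i
    · exact h2v i
  · intro i j hij
    exact max_lt ((h1m hij).trans_le (le_max_left _ _))
      ((h2m hij).trans_le (le_max_right _ _))
  · intro i
    rcases max_cases (e₁ i) (e₂ i) with ⟨hm, _⟩ | ⟨hm, _⟩ <;> simp only [hm]
    · exact h1v i
    · exact h2v i
  · intro i j heq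
    rcases min_cases (e₁ i) (e₂ i) with ⟨hi, hi'⟩ | ⟨hi, hi'⟩ <;>
      rcases max_cases (e₁ j) (e₂ j) with ⟨hj, hj'⟩ | ⟨hj, hj'⟩ <;>
        simp only [hi, hj] at heq
    · have : i = j := h1m.injective heq
      subst this
      exact hd i i (le_antisymm hi' (heq ▸ hj'))
    · exact hd i j heq
    · exact hd j i heq.symm
    · have : i = j := h2m.injective heq
      subst this
      exact absurd (hi'.trans hj') (lt_irrefl _)
  · intro k
    have hne : e₁ k ≠ e₂ k := hd k k
    rcases lt_or_gt_of_ne hne with hlt | hgt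
    · simpa [min_eq_left hlt.le, max_eq_right hlt.le] using hlt
    · simpa [min_eq_right hgt.le, max_eq_left hgt.le] using hgt
end
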